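/- On the half-space model of hyperbolic n-space, let T = (x₁/√(1+s²))(∂₁ + s ∂ₙ) where s = xₙ/x₁ is treated as the constant value on a fiber. Then, with respect to the hyperbolic Levi-Civita connection, ∇_T T = (x₁ xₙ/(x₁² + xₙ²))(xₙ ∂₁ - x₁ ∂ₙ). -/

import Mathlib

theorem stmt12 (n : ℕ) (hn : 2 ≤ n) (s : ℝ) (hs : 0 < s)
    (x : EuclideanSpace ℝ (Fin n)) (hx1 : 0 < x ⟨0, by omega⟩)
    (hfib : x ⟨n-1, by omega⟩ = s * x ⟨0, by omega⟩) :
    let i1 : Fin n := ⟨0, by omega⟩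
    let iN : Fin n := ⟨n-1, by omega⟩
    let γf : EuclideanSpace ℝ (Fin n) → ℝ := fun y => -Real.log (y i1)
    let T : EuclideanSpace ℝ (Fin n) → EuclideanSpace ℝ (Fin n) :=
      fun y => (y i1 / Real.sqrt (1+s^2)) •
        (EuclideanSpace.single i1 (1:ℝ) + s • EuclideanSpace.single iN (1:ℝ))
    -- ∇_T T computed via ∇_X Y = ∇ᴱ_X Y + X(γ)Y + Y(γ)X + x₁⁻¹⟨X,Y⟩∂₁
    fderiv ℝ T x (T x) + (fderiv ℝ γf x (T x)) • T x + (fderiv ℝ γf x (T x)) • T x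
      + ((x i1)⁻¹ * (inner ℝ (T x) (T x) : ℝ)) • EuclideanSpace.single i1 (1:ℝ)
      = ((x i1 * x iN) / ((x i1)^2 + (x iN)^2)) •
        ((x iN) • EuclideanSpace.single i1 (1:ℝ)
          - (x i1) • EuclideanSpace.single iN (1:ℝ)) := by
  intro i1 iN γf T
  have hne : i1 ≠ iN := by
    have h : (0 : ℕ) ≠ n - 1 := by omega
    exact fun h' => h (congrArg Fin.val h')
  set c := Real.sqrt (1 + s^2) with hc
  have hcpos : 0 < c := Real.sqrt_pos.mpr (by positivity)
  have hc' : c ≠ 0 := hcpos.ne'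
  have hx1' : x i1 ≠ 0 := hx1.ne'
  have hc2 : c ^ 2 = 1 + s ^ 2 := Real.sq_sqrt (by positivity)
  set v0 : EuclideanSpace ℝ (Fin n) :=
    EuclideanSpace.single i1 (1:ℝ) + s • EuclideanSpace.single iN (1:ℝ) with hv0
  set L : EuclideanSpace ℝ (Fin n) →L[ℝ] EuclideanSpace ℝ (Fin n) :=
    (EuclideanSpace.proj i1).smulRight ((1/c) • v0) with hL
  have hTL : T = ⇑L := by
    funext y
    show (y i1 / c) • v0 = L y
    simp only [L, ContinuousLinearMap.smulRight_apply, PiLp.proj_apply,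
      smul_smul]
    rw [div_eq_mul_inv, one_div]
  have hfderivT : fderiv ℝ T x = L := by
    rw [hTL]; exact L.fderiv
  have hTx1 : (T x) i1 = x i1 / c := by
    simp [T, v0, EuclideanSpace.single_apply, hne, hc]
  have hfd1 : fderiv ℝ T x (T x) = (x i1 / c ^ 2) • v0 := by
    rw [hfderivT]
    simp only [L, ContinuousLinearMap.smulRight_apply, PiLp.proj_apply,
      hTx1, smul_smul]
    congr 1
    rw [div_mul_div_comm, mul_one, sq]
  have hγ : fderiv ℝ γf x (T x) = -(1/c) := by
    have key : (fun y : EuclideanSpace ℝ (Fin n) => y i1)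
        = ⇑(EuclideanSpace.proj (𝕜 := ℝ) i1) := rfl
    have h1 : HasFDerivAt (fun y : EuclideanSpace ℝ (Fin n) => y i1)
        (EuclideanSpace.proj i1 : EuclideanSpace ℝ (Fin n) →L[ℝ] ℝ) x := by
      rw [key]
      exact (EuclideanSpace.proj i1 : EuclideanSpace ℝ (Fin n) →L[ℝ] ℝ).hasFDerivAt
    have hlog : HasFDerivAt (fun y : EuclideanSpace ℝ (Fin n) => Real.log (y i1))
        ((x i1)⁻¹ • (EuclideanSpace.proj i1 : EuclideanSpace ℝ (Fin n) →L[ℝ] ℝ)) x :=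
      by have := (Real.hasDerivAt_log hx1').comp_hasFDerivAt x h1; exact this
    have := hlog.neg
    show fderiv ℝ (-fun y : EuclideanSpace ℝ (Fin n) => Real.log (y i1)) x (T x) = -(1/c)
    rw [this.fderiv]
    simp [hTx1]
    field_simp
  have hinner : (inner ℝ (T x) (T x) : ℝ) = (x i1) ^ 2 := by
    have hvv : (inner ℝ v0 v0 : ℝ) = 1 + s ^ 2 := by
      simp only [v0, inner_add_left, inner_add_right, real_inner_smul_left, real_inner_smul_right,
        EuclideanSpace.inner_single_left, EuclideanSpace.single_apply, if_neg hne.symm, map_one, one_mul]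
      simp [hne, hne.symm]
      ring
    show (inner ℝ ((x i1 / c) • v0) ((x i1 / c) • v0) : ℝ) = (x i1) ^ 2
    rw [real_inner_smul_left, real_inner_smul_right, hvv, ← hc2]
    field_simp
  have hTxeq : T x = (x i1 / c) • EuclideanSpace.single i1 (1:ℝ)
      + (x i1 / c * s) • EuclideanSpace.single iN (1:ℝ) := by
    show (x i1 / c) • v0 = _
    rw [hv0, smul_add, smul_smul]
  rw [hfd1, hγ, hinner, hTxeq, hv0, hfib]
  ext j
  simp only [PiLp.add_apply, PiLp.sub_apply, PiLp.smul_apply,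
    EuclideanSpace.single_apply, smul_eq_mul]
  rcases eq_or_ne j i1 with h1 | h1
  · subst h1
    simp only [if_pos rfl, if_neg hne, ↓reduceIte]
    field_simp
    linear_combination (x i1 ^ 2) * hc2
  · rcases eq_or_ne j iN with h2 | h2
    · subst h2
      simp only [if_pos rfl, if_neg h1, if_neg hne.symm, ↓reduceIte]
      field_simp
      linear_combination (s * x i1 ^ 2) * hc2
    · simp [if_neg h1, if_neg h2]
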